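/- For every integer k ≥ 1, taking q = 1 - 2^(-k), the greedy shooting sequence satisfies a_q(N) = t_N for all 0 ≤ N < 3·2^(k-1), and a_q(3·2^(k-1)) ≠ t_{3·2^(k-1)}. -/

import Mathlib

/-- The Thue-Morse sequence: `tm n = (-1)^(s₂ n)` where `s₂ n` is the sum of the
binary digits of `n`. -/
def tm (n : ℕ) : ℤ := (-1) ^ (Nat.digits 2 n).sum

/-- The greedy shooting sequence: `a q N = 1` if `∑_{0 ≤ j < N} a q j * q^j ≤ 0`,
and `a q N = -1` otherwise. -/
noncomputable def a (q : ℝ) : ℕ → ℤ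
  | N => if (∑ j : Fin N, (a q j : ℝ) * q ^ (j : ℕ)) ≤ 0 then 1 else -1
decreasing_by all_goals exact j.isLt

/-! ### Basic facts about the Thue–Morse sequence -/

lemma tm_zero : tm 0 = 1 := by simp [tm]

lemma tm_two_mul (n : ℕ) : tm (2*n) = tm n := by
  rcases Nat.eq_zero_or_pos n with h | h
  · simp [h]
  · unfold tm
    rw [Nat.digits_def' (by norm_num) (by omega)]
    simp [Nat.mul_div_cancel_left, Nat.mul_mod_right]

lemma tm_two_mul_add_one (n : ℕ) : tm (2*n+1) = -tm n := by
  unfold tm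
  rw [Nat.digits_def' (by norm_num) (by omega)]
  have h1 : (2*n+1) % 2 = 1 := by omega
  have h2 : (2*n+1) / 2 = n := by omega
  rw [h1, h2]
  simp [pow_add, pow_succ]

lemma tm_one : tm 1 = -1 := by rw [show (1:ℕ) = 2*0+1 from rfl, tm_two_mul_add_one, tm_zero]
lemma tm_two : tm 2 = -1 := by rw [show (2:ℕ) = 2*1 from rfl, tm_two_mul, tm_one]
lemma tm_three : tm 3 = 1 := by
  rw [show (3:ℕ) = 2*1+1 from rfl, tm_two_mul_add_one, tm_one]; rfl

lemma tm_cases (n : ℕ) : tm n = 1 ∨ tm n = -1 := by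
  rcases Nat.even_or_odd ((Nat.digits 2 n).sum) with h | h
  · left; simp [tm, h.neg_one_pow]
  · right; simp [tm, h.neg_one_pow]

lemma tm_three_pow (e : ℕ) : tm (3 * 2^e) = 1 := by
  induction e with
  | zero => simpa using tm_three
  | succ e ih =>
    rw [show 3 * 2^(e+1) = 2 * (3 * 2^e) by rw [pow_succ]; ring, tm_two_mul, ih]

/-! ### The Thue–Morse power series partial sums -/

noncomputable def F (x : ℝ) (n : ℕ) : ℝ := ∑ j ∈ Finset.range n, (tm j : ℝ) * x ^ j

lemma F_zero (x : ℝ) : F x 0 = 0 := by simp [F]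
lemma F_one (x : ℝ) : F x 1 = 1 := by simp [F, tm_zero]

lemma F_double (x : ℝ) (n : ℕ) : F x (2*n) = (1-x) * F (x^2) n := by
  induction n with
  | zero => simp [F]
  | succ n ih =>
    have h1 : 2*(n+1) = (2*n) + 1 + 1 := by ring
    rw [h1]
    unfold F
    rw [Finset.sum_range_succ, Finset.sum_range_succ]
    show F x (2*n) + _ + _ = _
    rw [ih, tm_two_mul, tm_two_mul_add_one]
    unfold F
    rw [Finset.sum_range_succ]
    push_cast
    ring

lemma F_odd (x : ℝ) (n : ℕ) : F x (2*n+1) = (1-x) * F (x^2) n + (tm n : ℝ) * x^(2*n) := by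
  unfold F
  rw [Finset.sum_range_succ]
  show F x (2*n) + _ = _
  rw [F_double, tm_two_mul]
  rfl

lemma F_three (x : ℝ) : F x 3 = 1 - x - x^2 := by
  rw [F]
  rw [Finset.sum_range_succ, Finset.sum_range_succ, Finset.sum_range_one]
  rw [tm_zero, tm_one, tm_two]
  push_cast
  ring

lemma F_bounds : ∀ n : ℕ, ∀ x : ℝ, 0 ≤ x → x ≤ 1 →
    F x n ≤ 1 ∧ (1 ≤ n → 1 - 2*x ≤ F x n) := by
  intro n
  induction n using Nat.strong_induction_on with
  | _ n ih =>
    intro x hx0 hx1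
    match n, ih with
    | 0, _ => simp [F_zero]
    | 1, _ => simp [F_one]; nlinarith
    | (n+2), ih =>
      have hy0 : (0:ℝ) ≤ x^2 := by positivity
      have hy1 : x^2 ≤ 1 := by nlinarith
      rcases Nat.even_or_odd (n+2) with ⟨m, hm⟩ | ⟨m, hm⟩
      · have hm1 : 1 ≤ m := by omega
        have hmlt : m < n + 2 := by omega
        obtain ⟨hub, hlb⟩ := ih m hmlt (x^2) hy0 hy1
        have hlb' := hlb hm1
        rw [show n+2 = 2*m by omega, F_double]
        constructor
        · nlinarith
        · intro _; nlinarith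
      · have hm1 : 1 ≤ m := by omega
        have hmlt : m < n + 2 := by omega
        obtain ⟨hub, hlb⟩ := ih m hmlt (x^2) hy0 hy1
        have hlb' := hlb hm1
        rw [show n+2 = 2*m+1 by omega, F_odd]
        have hpow : x^(2*m) ≤ x^2 := pow_le_pow_of_le_one hx0 hx1 (by omega)
        have hpow0 : 0 ≤ x^(2*m) := by positivity
        have htm := tm_cases m
        constructor
        · rcases htm with h | h <;> rw [h] <;> push_cast <;> nlinarith
        · intro _
          rcases htm with h | h <;> rw [h] <;> push_cast
          · nlinarith
          · rcases Nat.lt_or_ge m 2 with hm2 | hm2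
            · have : m = 1 := by omega
              subst this
              have hF1 : F (x^2) 1 = 1 := F_one _
              rw [hF1]
              nlinarith
            · have hpow4 : x^(2*m) ≤ x^4 := pow_le_pow_of_le_one hx0 hx1 (by omega)
              nlinarith [sq_nonneg (1-x), sq_nonneg x]

/-! ### The sign lemma -/

lemma sign_lemma : ∀ n : ℕ, ∀ x : ℝ, 0 < x → x < 1 →
    (∀ i m : ℕ, 1 ≤ m → n = 2^i * (2*m+1) → 1 - x^(2^i) ≤ x^(2^i * (2*m))) →
    (tm n = 1 → F x n ≤ 0) ∧ (tm n = -1 → 0 < F x n) := by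
  intro n
  induction n using Nat.strong_induction_on with
  | _ n ih =>
    intro x hx0 hx1 hyp
    match n, ih with
    | 0, _ =>
      refine ⟨fun _ => by rw [F_zero], fun h => ?_⟩
      rw [tm_zero] at h; omega
    | 1, _ =>
      refine ⟨fun h => ?_, fun _ => by rw [F_one]; norm_num⟩
      rw [tm_one] at h; omega
    | (n+2), ih =>
      have hy0 : (0:ℝ) < x^2 := by positivity
      have hy1 : x^2 < 1 := by nlinarith
      rcases Nat.even_or_odd (n+2) with ⟨m, hm⟩ | ⟨m, hm⟩
      · -- even case
        have hm1 : 1 ≤ m := by omega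
        have hmlt : m < n + 2 := by omega
        have hyp' : ∀ i m' : ℕ, 1 ≤ m' → m = 2^i * (2*m'+1) →
            1 - (x^2)^(2^i) ≤ (x^2)^(2^i * (2*m')) := by
          intro i m' hm' hdec
          have h1 : n + 2 = 2^(i+1) * (2*m'+1) := by
            rw [show n+2 = 2*m by omega, hdec]; ring
          have := hyp (i+1) m' hm' h1
          rw [← pow_mul, ← pow_mul]
          rw [show 2 * 2^i = 2^(i+1) by ring, show 2 * (2^i * (2*m')) = 2^(i+1) * (2*m') by ring] at *
          convert this using 2
        obtain ⟨h1, h2⟩ := ih m hmlt (x^2) hy0 hy1 hyp'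
        rw [show n+2 = 2*m by omega, F_double, tm_two_mul]
        constructor
        · intro h; nlinarith [h1 h]
        · intro h; nlinarith [h2 h]
      · -- odd case, n+2 = 2m+1, m ≥ 1
        have hm1 : 1 ≤ m := by omega
        have key : 1 - x ≤ x^(2*m) := by
          have := hyp 0 m hm1 (by omega)
          simpa using this
        obtain ⟨hub, hlb⟩ := F_bounds m (x^2) (le_of_lt hy0) (le_of_lt hy1)
        have hlb' := hlb hm1
        rw [show n+2 = 2*m+1 by omega, F_odd, tm_two_mul_add_one]
        have hpow0 : (0:ℝ) < x^(2*m) := by positivity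
        rcases tm_cases m with h | h <;> rw [h] <;> push_cast
        · -- tm m = 1, tm n = -1, need F > 0
          refine ⟨fun hc => hc.elim, fun _ => ?_⟩
          rcases le_or_gt 0 (F (x^2) m) with hG | hG
          · nlinarith
          · nlinarith
        · -- tm m = -1, tm n = 1, need F ≤ 0
          refine ⟨fun _ => ?_, fun hc => hc.elim⟩
          nlinarith

/-! ### Verifying the hypothesis for `q = 1 - 2^(-k)` -/

lemma hyp_holds (k : ℕ) (hk : 1 ≤ k) (n : ℕ) (hn : n < 3 * 2^(k-1)) :
    ∀ i m : ℕ, 1 ≤ m → n = 2^i * (2*m+1) →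
      1 - (1 - (2:ℝ)^(-(k:ℤ)))^(2^i) ≤ (1 - (2:ℝ)^(-(k:ℤ)))^(2^i * (2*m)) := by
  intro i m hm hdec
  set ε : ℝ := (2:ℝ)^(-(k:ℤ)) with hε
  have hεeq : ε = ((2:ℝ)^k)⁻¹ := by rw [hε, zpow_neg, zpow_natCast]
  have hε0 : 0 < ε := by rw [hεeq]; positivity
  have hεhalf : ε ≤ 1/2 := by
    have h2 : (2:ℝ)^1 ≤ 2^k := pow_le_pow_right₀ one_le_two hk
    have := inv_anti₀ (by norm_num : (0:ℝ) < 2^1) h2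
    rw [hεeq]
    norm_num at this ⊢
    linarith
  set q : ℝ := 1 - ε with hq
  have hq0 : 0 < q := by rw [hq]; linarith
  have hq1 : q < 1 := by rw [hq]; linarith
  have bern : ∀ d : ℕ, 1 - d * ε ≤ q ^ d := by
    intro d
    have := one_add_mul_le_pow (a := -ε) (by linarith) d
    rw [hq]
    calc 1 - d*ε = 1 + d * (-ε) := by ring
    _ ≤ (1 + (-ε))^d := this
    _ = (1 - ε)^d := by ring_nf
  have half : (1:ℝ)/2 ≤ q ^ (2^(k-1)) := by
    have h2k : (2:ℝ)^k = 2 * 2^(k-1) := by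
      conv_lhs => rw [show k = (k-1)+1 by omega]
      rw [pow_succ]
      ring
    have := bern (2^(k-1))
    have heq : ((2^(k-1) : ℕ) : ℝ) * ε = 1/2 := by
      rw [hεeq, h2k]
      push_cast
      field_simp
    rw [heq] at this
    linarith
  have hik : i + 2 ≤ k := by
    have h3 : 3 * 2^i ≤ n := by
      rw [hdec]
      have : 3 ≤ 2*m+1 := by omega
      nlinarith [pow_pos (show (0:ℕ) < 2 by norm_num) i, Nat.one_le_two_pow (n := i)]
    have hpow : 2^i < 2^(k-1) := by omega
    have : i < k - 1 := (Nat.pow_lt_pow_iff_right (by norm_num)).mp hpow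
    omega
  set j := k - i with hj
  have hj2 : 2 ≤ j := by omega
  have hexp : 2^i * (2*m) ≤ j * 2^(k-1) := by
    rcases Nat.eq_or_lt_of_le hj2 with hj2' | hj3
    · have hik2 : i = k - 2 := by omega
      have h6 : 2^i * (2*m+1) < 6 * 2^(k-2) := by
        calc 2^i * (2*m+1) = n := hdec.symm
        _ < 3 * 2^(k-1) := hn
        _ = 6 * 2^(k-2) := by
            have : k - 1 = (k-2) + 1 := by omega
            rw [this, pow_succ]; ring
      rw [hik2] at h6 ⊢
      have hp : 0 < 2^(k-2) := pow_pos (by norm_num) _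
      have hm5 : 2*m+1 < 6 := by
        by_contra hcon
        push_neg at hcon
        nlinarith
      have : 2*m ≤ 4 := by omega
      calc 2^(k-2) * (2*m) ≤ 2^(k-2) * 4 := by nlinarith
      _ = 2 * 2^(k-1) := by
          have : k - 1 = (k-2) + 1 := by omega
          rw [this, pow_succ]; ring
      _ = j * 2^(k-1) := by rw [← hj2']
    · have : 2^i * (2*m) ≤ n := by
        rw [hdec]; nlinarith [pow_pos (show (0:ℕ) < 2 by norm_num) i]
      calc 2^i * (2*m) ≤ n := this
      _ ≤ 3 * 2^(k-1) := le_of_lt hn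
      _ ≤ j * 2^(k-1) := by
          apply Nat.mul_le_mul_right
          omega
  have step1 : 1 - q^(2^i) ≤ (2^i : ℝ) * ε := by
    have := bern (2^i)
    push_cast at this ⊢
    linarith
  have step2 : (2^i : ℝ) * ε = (1/2 : ℝ)^j := by
    rw [hεeq]
    have h2k : (2:ℝ)^k = 2^i * 2^j := by
      rw [← pow_add]
      congr 1
      omega
    rw [h2k]
    have hhj : ((1:ℝ)/2)^j = ((2:ℝ)^j)⁻¹ := by rw [div_pow]; norm_num
    rw [hhj]
    have h2i : ((2:ℝ)^i) ≠ 0 := by positivity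
    have h2j : ((2:ℝ)^j) ≠ 0 := by positivity
    field_simp
  have step3 : ((1:ℝ)/2)^j ≤ (q^(2^(k-1)))^j := pow_le_pow_left₀ (by norm_num) half j
  have step4 : (q^(2^(k-1)))^j ≤ q^(2^i * (2*m)) := by
    rw [← pow_mul]
    apply pow_le_pow_of_le_one (le_of_lt hq0) (le_of_lt hq1)
    calc 2^i * (2*m) ≤ j * 2^(k-1) := hexp
    _ = 2^(k-1) * j := Nat.mul_comm _ _
  calc 1 - q^(2^i) ≤ (2^i:ℝ) * ε := step1
  _ = (1/2:ℝ)^j := step2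
  _ ≤ (q^(2^(k-1)))^j := step3
  _ ≤ q^(2^i*(2*m)) := step4

/-! ### Positivity at `3 * 2^(k-1)` -/

lemma F_three_pow : ∀ e : ℕ, ∀ x : ℝ, 0 < x → x < 1 →
    x^(2^e) + (x^(2^e))^2 < 1 → 0 < F x (3 * 2^e) := by
  intro e
  induction e with
  | zero =>
    intro x hx0 hx1 h
    simp at h ⊢
    rw [F_three]
    nlinarith
  | succ e ih =>
    intro x hx0 hx1 h
    have h1 : 3 * 2^(e+1) = 2 * (3 * 2^e) := by ring
    rw [h1, F_double]
    have hy0 : (0:ℝ) < x^2 := by positivity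
    have hy1 : x^2 < 1 := by nlinarith
    have hyp : (x^2)^(2^e) + ((x^2)^(2^e))^2 < 1 := by
      rw [← pow_mul]
      rw [show 2 * 2^e = 2^(e+1) by rw [pow_succ]; ring]
      exact h
    have := ih (x^2) hy0 hy1 hyp
    nlinarith

lemma y_bound (k : ℕ) (hk : 1 ≤ k) :
    (1 - (2:ℝ)^(-(k:ℤ)))^(2^(k-1)) + ((1 - (2:ℝ)^(-(k:ℤ)))^(2^(k-1)))^2 < 1 := by
  set ε : ℝ := (2:ℝ)^(-(k:ℤ)) with hε
  have hεeq : ε = ((2:ℝ)^k)⁻¹ := by rw [hε, zpow_neg, zpow_natCast]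
  have hε0 : 0 < ε := by rw [hεeq]; positivity
  have hε1 : ε < 1 := by
    rw [hεeq]
    rw [inv_lt_one_iff₀]
    right
    calc (1:ℝ) < 2^1 := by norm_num
    _ ≤ 2^k := pow_le_pow_right₀ one_le_two hk
  set q : ℝ := 1 - ε with hq
  have hq0 : 0 < q := by rw [hq]; linarith
  have hqexp : q ≤ Real.exp (-ε) := by
    have := Real.add_one_le_exp (-ε)
    rw [hq]; linarith
  have hy : q^(2^(k-1)) ≤ Real.exp (-(1/2)) := by
    calc q^(2^(k-1)) ≤ (Real.exp (-ε))^(2^(k-1)) :=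
          pow_le_pow_left₀ (le_of_lt hq0) hqexp _
    _ = Real.exp (-(((2^(k-1) : ℕ) : ℝ) * ε)) := by
        rw [← Real.exp_nat_mul]; ring_nf
    _ = Real.exp (-(1/2)) := by
        congr 1
        have h2k : (2:ℝ)^k = 2 * 2^(k-1) := by
          conv_lhs => rw [show k = (k-1)+1 by omega]
          rw [pow_succ]; ring
        rw [hεeq, h2k]
        push_cast
        field_simp
  set z := Real.exp (-(1/2)) with hz
  have hz0 : 0 < z := Real.exp_pos _
  have hzsq : z^2 = Real.exp (-1) := by
    rw [hz, ← Real.exp_nat_mul]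
    norm_num
  have he : Real.exp 1 > 2.7182818283 := Real.exp_one_gt_d9
  have hzsq_lt : z^2 < 0.37 := by
    rw [hzsq, Real.exp_neg]
    rw [inv_lt_iff_one_lt_mul₀ (Real.exp_pos 1)]
    nlinarith
  have hz_lt : z < 0.61 := by
    nlinarith [hzsq_lt, sq_nonneg (z - 0.61), hz0]
  have hq2 : 0 ≤ q^(2^(k-1)) := by positivity
  have hysq : (q^(2^(k-1)))^2 ≤ z^2 := by nlinarith [hy, hq2]
  nlinarith [hy, hz_lt, hzsq_lt, hysq]

/-! ### Connecting the greedy sequence to `F` -/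

lemma a_unfold (q : ℝ) (N : ℕ) :
    a q N = if (∑ j : Fin N, (a q j : ℝ) * q ^ (j : ℕ)) ≤ 0 then 1 else -1 := by
  rw [a]

lemma sum_eq (q : ℝ) (N : ℕ) (h : ∀ j < N, a q j = tm j) :
    (∑ j : Fin N, (a q j : ℝ) * q ^ (j : ℕ)) = F q N := by
  rw [Fin.sum_univ_eq_sum_range (fun j => (a q j : ℝ) * q ^ j)]
  unfold F
  apply Finset.sum_congr rfl
  intro j hj
  rw [h j (Finset.mem_range.mp hj)]

theorem corollary_pow_two (k : ℕ) (hk : 1 ≤ k) :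
    (∀ N < 3 * 2 ^ (k - 1), a (1 - (2 : ℝ) ^ (-(k : ℤ))) N = tm N) ∧
      a (1 - (2 : ℝ) ^ (-(k : ℤ))) (3 * 2 ^ (k - 1)) ≠ tm (3 * 2 ^ (k - 1)) := by
  set q : ℝ := 1 - (2:ℝ)^(-(k:ℤ)) with hqdef
  have hεeq : (2:ℝ)^(-(k:ℤ)) = ((2:ℝ)^k)⁻¹ := by rw [zpow_neg, zpow_natCast]
  have hε0 : (0:ℝ) < (2:ℝ)^(-(k:ℤ)) := by rw [hεeq]; positivity
  have hεhalf : (2:ℝ)^(-(k:ℤ)) ≤ 1/2 := by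
    have h2 : (2:ℝ)^1 ≤ 2^k := pow_le_pow_right₀ one_le_two hk
    have := inv_anti₀ (by norm_num : (0:ℝ) < 2^1) h2
    rw [hεeq]
    norm_num at this ⊢
    linarith
  have hq0 : 0 < q := by rw [hqdef]; linarith
  have hq1 : q < 1 := by rw [hqdef]; linarith
  have hmain : ∀ N, N < 3 * 2^(k-1) → a q N = tm N := by
    intro N
    induction N using Nat.strong_induction_on with
    | _ N ih =>
      intro hN
      rw [a_unfold, sum_eq q N (fun j hj => ih j hj (lt_trans hj hN))]
      obtain ⟨h1, h2⟩ := sign_lemma N q hq0 hq1 (hyp_holds k hk N hN)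
      rcases tm_cases N with h | h
      · rw [h, if_pos (h1 h)]
      · rw [h, if_neg (not_le.mpr (h2 h))]
  refine ⟨hmain, ?_⟩
  rw [a_unfold, sum_eq q _ hmain, tm_three_pow (k-1)]
  have hpos : 0 < F q (3 * 2^(k-1)) := F_three_pow (k-1) q hq0 hq1 (y_bound k hk)
  rw [if_neg (not_le.mpr hpos)]
  norm_num
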